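/- Suppose Δ is an h-transverse polygon with upper edge length d_0 ≥ δ, right directions c_1 > ... > c_n ≥ 0 with d_0 + c_1 ≥ 2δ, all left directions 0, and first divergence entries a_0 = d_0, a_1 = r_1 where r is a permutation of the right directions with cogenus δ(r) ≤ δ. Then for any collection of templates Γ with δ(Γ) = δ − δ(r) and any template Γ_i in the collection and any 1 ≤ j ≤ l(Γ_i), we have a_0 + a_1 ≥ κ_j(Γ_i). -/

import Mathlib

/-- A template: a directed graph on vertices `{0, ..., l}` (`l ≥ 1`), possibly with
multiple edges, recorded as a multiset of triples `(i, j, w)` meaning an edge `i → j`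
of weight `w`, such that `i < j`, `j ≤ l`, `w > 0`, every edge between consecutive
vertices has weight at least 2, and every intermediate vertex is covered by an edge. -/
structure Template where
  l : ℕ
  edges : Multiset (ℕ × ℕ × ℕ)
  one_le_l : 1 ≤ l
  lt_of_mem : ∀ e ∈ edges, e.1 < e.2.1
  le_l : ∀ e ∈ edges, e.2.1 ≤ l
  w_pos : ∀ e ∈ edges, 0 < e.2.2
  short_two : ∀ e ∈ edges, e.2.1 = e.1 + 1 → 2 ≤ e.2.2
  covered : ∀ j, 1 ≤ j → j + 1 ≤ l → ∃ e ∈ edges, e.1 < j ∧ j < e.2.1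

/-- The cogenus `δ(Γ) = ∑_{edges i→j} ((j−i)·w(e) − 1)`. -/
def Template.cogenus (Γ : Template) : ℕ :=
  (Γ.edges.map (fun e => (e.2.1 - e.1) * e.2.2 - 1)).sum

/-- `κ_j(Γ)`: the sum of the weights of edges `i → k` with `i < j ≤ k`. -/
def Template.kappa (Γ : Template) (j : ℕ) : ℕ :=
  ((Γ.edges.filter (fun e => e.1 < j ∧ j ≤ e.2.1)).map (fun e => e.2.2)).sum

/-- The multiplicity `μ(Γ) = ∏_e w(e)²`. -/
def Template.mult (Γ : Template) : ℕ :=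
  (Γ.edges.map (fun e => e.2.2 ^ 2)).prod

/-- The cogenus `δ(r) = ∑_{i<j, r_i<r_j} (r_j − r_i)` of a sequence `r` of length `M`. -/
def deltaSeq (M : ℕ) (r : ℕ → ℤ) : ℤ :=
  ∑ p ∈ (Finset.range M ×ˢ Finset.range M).filter
      (fun p => p.1 < p.2 ∧ r p.1 < r p.2), (r p.2 - r p.1)

/-- In the first-quadrant setting with `d_0 ≥ δ`, `d_0 + c_1 ≥ 2δ`, right directions
`c_1 > ⋯ > c_n ≥ 0` with multiplicities `d_i`, a permutation `r` of the right directions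
with `δ(r) ≤ δ`, and a collection of templates `Γs` with total cogenus `δ − δ(r)`:
every template `Γᵢ` in the collection and every `1 ≤ j ≤ l(Γᵢ)` satisfy
`κ_j(Γᵢ) ≤ a_0 + a_1 = d_0 + r_1`. -/

lemma kappa_le_two_cogenus (Γ : Template) (j : ℕ) : Γ.kappa j ≤ 2 * Γ.cogenus := by
  unfold Template.kappa Template.cogenus
  calc ((Γ.edges.filter (fun e => e.1 < j ∧ j ≤ e.2.1)).map (fun e => e.2.2)).sum
      ≤ ((Γ.edges.filter (fun e => e.1 < j ∧ j ≤ e.2.1)).map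
          (fun e => 2 * ((e.2.1 - e.1) * e.2.2 - 1))).sum := by
        apply Multiset.sum_map_le_sum_map
        intro e he
        have he' := Multiset.mem_of_mem_filter he
        have h1 := Γ.lt_of_mem e he'
        have h2 := Γ.w_pos e he'
        have h3 := Γ.short_two e he'
        rcases eq_or_lt_of_le (Nat.succ_le_of_lt h1) with h | h
        · have := h3 h.symm
          have : e.2.1 - e.1 = 1 := by omega
          rw [this]; omega
        · have hm : 2 ≤ e.2.1 - e.1 := by omega
          have : 2 * e.2.2 ≤ (e.2.1 - e.1) * e.2.2 := Nat.mul_le_mul_right _ hm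
          omega
    _ ≤ (Γ.edges.map (fun e => 2 * ((e.2.1 - e.1) * e.2.2 - 1))).sum := by
        conv_rhs => rw [← Multiset.filter_add_not (fun e => e.1 < j ∧ j ≤ e.2.1) Γ.edges]
        rw [Multiset.map_add, Multiset.sum_add]
        exact Nat.le_add_right _ _
    _ = 2 * (Γ.edges.map (fun e => (e.2.1 - e.1) * e.2.2 - 1)).sum := by
        rw [← Multiset.sum_map_mul_left]

lemma deltaSeq_nonneg (M : ℕ) (r : ℕ → ℤ) : 0 ≤ deltaSeq M r := by
  apply Finset.sum_nonneg
  intro p hp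
  have := (Finset.mem_filter.mp hp).2.2
  linarith

theorem kappa_le_a0_add_a1 (δ n M d0 : ℕ) (c : ℕ → ℤ) (d : ℕ → ℕ) (r : ℕ → ℤ)
    (Γs : List Template) (Γi : Template) (hmem : Γi ∈ Γs)
    (j : ℕ) (hj1 : 1 ≤ j) (hj2 : j ≤ Γi.l)
    (hn : 1 ≤ n)
    (hc : ∀ i i', 1 ≤ i → i < i' → i' ≤ n → c i' < c i)
    (hcnn : ∀ i, 1 ≤ i → i ≤ n → 0 ≤ c i)
    (hd : ∀ i, 1 ≤ i → i ≤ n → 1 ≤ d i)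
    (hM : M = ∑ i ∈ Finset.Icc 1 n, d i)
    (hcount : ∀ i, 1 ≤ i → i ≤ n →
      ((Finset.range M).filter (fun m => r m = c i)).card = d i)
    (hd0 : (δ : ℤ) ≤ (d0 : ℤ))
    (hd0c : 2 * (δ : ℤ) ≤ (d0 : ℤ) + c 1)
    (hδr : deltaSeq M r ≤ (δ : ℤ))
    (hΓ : ((Γs.map Template.cogenus).sum : ℤ) = (δ : ℤ) - deltaSeq M r) :
    (Γi.kappa j : ℤ) ≤ (d0 : ℤ) + r 0 := by
  -- key facts
  have hk : (Γi.kappa j : ℤ) ≤ 2 * (Γi.cogenus : ℤ) := by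
    exact_mod_cast kappa_le_two_cogenus Γi j
  have hci : (Γi.cogenus : ℤ) ≤ ((Γs.map Template.cogenus).sum : ℤ) := by
    exact_mod_cast List.single_le_sum (fun x _ => Nat.zero_le x) _
      (List.mem_map_of_mem (f := Template.cogenus) hmem)
  have hnn := deltaSeq_nonneg M r
  -- M ≥ 1
  have hM1 : 1 ≤ M := by
    rw [hM]
    calc 1 ≤ d 1 := hd 1 le_rfl hn
      _ ≤ _ := Finset.single_le_sum (fun i _ => Nat.zero_le _)
          (Finset.mem_Icc.mpr ⟨le_rfl, hn⟩)
  -- r 0 is one of the c i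
  have hr0 : ∃ i, 1 ≤ i ∧ i ≤ n ∧ r 0 = c i := by
    set S : ℕ → Finset ℕ := fun i => (Finset.range M).filter (fun m => r m = c i) with hS
    have hdisj : ∀ x ∈ Finset.Icc 1 n, ∀ y ∈ Finset.Icc 1 n, x ≠ y →
        Disjoint (S x) (S y) := by
      intro x hx y hy hxy
      have hx' := Finset.mem_Icc.mp hx
      have hy' := Finset.mem_Icc.mp hy
      have hcc : c x ≠ c y := by
        rcases lt_or_gt_of_ne hxy with h | h
        · exact ne_of_gt (hc x y hx'.1 h hy'.2)
        · exact ne_of_lt (hc y x hy'.1 h hx'.2)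
      refine Finset.disjoint_left.mpr ?_
      intro m hmx hmy
      have h1 := (Finset.mem_filter.mp hmx).2
      have h2 := (Finset.mem_filter.mp hmy).2
      exact hcc (h1 ▸ h2 ▸ rfl)
    have hcard : ((Finset.Icc 1 n).biUnion S).card = M := by
      rw [Finset.card_biUnion hdisj, hM]
      apply Finset.sum_congr rfl
      intro i hi
      have hi' := Finset.mem_Icc.mp hi
      exact hcount i hi'.1 hi'.2
    have hsub : (Finset.Icc 1 n).biUnion S ⊆ Finset.range M := by
      intro m hm
      obtain ⟨i, _, hmi⟩ := Finset.mem_biUnion.mp hm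
      exact (Finset.mem_filter.mp hmi).1
    have heq : (Finset.Icc 1 n).biUnion S = Finset.range M :=
      Finset.eq_of_subset_of_card_le hsub (by rw [hcard, Finset.card_range])
    have h0 : (0 : ℕ) ∈ (Finset.Icc 1 n).biUnion S := by
      rw [heq]; exact Finset.mem_range.mpr hM1
    obtain ⟨i, hi, h0i⟩ := Finset.mem_biUnion.mp h0
    have hi' := Finset.mem_Icc.mp hi
    exact ⟨i, hi'.1, hi'.2, (Finset.mem_filter.mp h0i).2⟩
  -- δ(r) ≥ c 1 - r 0
  have hkey : c 1 - r 0 ≤ deltaSeq M r := by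
    obtain ⟨i, hi1, hin, hr0i⟩ := hr0
    rcases eq_or_lt_of_le hi1 with h | h
    · rw [hr0i, ← h]; linarith
    · have hlt : r 0 < c 1 := by rw [hr0i]; exact hc 1 i le_rfl h hin
      have hS1 : ((Finset.range M).filter (fun m => r m = c 1)).Nonempty := by
        rw [← Finset.card_pos, hcount 1 le_rfl hn]; exact hd 1 le_rfl hn
      obtain ⟨m, hm⟩ := hS1
      have hmr := (Finset.mem_filter.mp hm).1
      have hmc : r m = c 1 := (Finset.mem_filter.mp hm).2
      have hm0 : 0 < m := by
        rcases Nat.eq_zero_or_pos m with h0 | h0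
        · exfalso; rw [h0] at hmc; rw [hmc] at hlt; exact lt_irrefl _ hlt
        · exact h0
      have hmem' : ((0 : ℕ), m) ∈ (Finset.range M ×ˢ Finset.range M).filter
          (fun p => p.1 < p.2 ∧ r p.1 < r p.2) := by
        refine Finset.mem_filter.mpr ⟨Finset.mem_product.mpr ⟨?_, hmr⟩, hm0, ?_⟩
        · exact Finset.mem_range.mpr hM1
        · rw [hmc]; exact hlt
      have := Finset.single_le_sum (f := fun p : ℕ × ℕ => r p.2 - r p.1)
        (fun p hp => by have := (Finset.mem_filter.mp hp).2.2; show (0:ℤ) ≤ r p.2 - r p.1; linarith)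
        hmem'
      simp only [] at this
      unfold deltaSeq
      linarith
  linarith
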